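/- For all integers n > 0 and 0 < k < n, there exists a bijection between the set of (k,n)-source Grassmann necklaces and the set of (k,n)-bounded affine permutations. -/

import Mathlib

/-- A `(k,n)`-source Grassmann necklace, encoded as an `n`-periodic function
`I : ℕ → Finset ℕ` (the entries `I 1, …, I n` form the necklace, and
periodicity provides the convention `I 0 = I n`). -/
def IsSourceGN (n k : ℕ) (I : ℕ → Finset ℕ) : Prop :=
  (∀ r, I (r + n) = I r) ∧
  (∀ r ∈ Finset.Icc 1 n, (I r).card = k ∧ I r ⊆ Finset.Icc 1 n) ∧
  (∀ i ∈ Finset.Icc 1 n,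
    (i ∈ I i → ∃ j ∈ Finset.Icc 1 n, I (i - 1) = insert j (I i \ {i})) ∧
    (i ∉ I i → I (i - 1) = I i))

/-- A `(k,n)`-bounded affine permutation. -/
def IsBoundedAffinePerm (n k : ℕ) (f : ℤ → ℤ) : Prop :=
  Function.Bijective f ∧
  (∀ i : ℤ, f (i + n) = f i + n) ∧
  (∀ i : ℤ, i ≤ f i ∧ f i ≤ i + n) ∧
  (∑ i ∈ Finset.Icc (1 : ℤ) (n : ℤ), (f i - i)) = (n : ℤ) * (k : ℤ)

namespace GNP

/-- representative of `x` in `[1..n]` -/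
def resn (n : ℕ) (x : ℤ) : ℕ := ((x - 1) % (n:ℤ)).toNat + 1
section Base
variable {n : ℕ}




lemma resn_mem (hn : 0 < n) (x : ℤ) : resn n x ∈ Finset.Icc 1 n := by
  have h0 : (0:ℤ) < (n:ℤ) := by exact_mod_cast hn
  have h1 : 0 ≤ (x - 1) % (n:ℤ) := Int.emod_nonneg _ (by omega)
  have h2 : (x - 1) % (n:ℤ) < n := Int.emod_lt_of_pos _ h0
  simp only [Finset.mem_Icc, resn]
  omega

lemma resn_dvd (hn : 0 < n) (x : ℤ) : (n:ℤ) ∣ x - resn n x := by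
  have h0 : (0:ℤ) < (n:ℤ) := by exact_mod_cast hn
  have h1 : 0 ≤ (x - 1) % (n:ℤ) := Int.emod_nonneg _ (by omega)
  have h3 : ((x - 1) % (n:ℤ)).toNat = ((x-1) % (n:ℤ)) := Int.toNat_of_nonneg h1
  have h4 : (n:ℤ) ∣ (x - 1) - (x - 1) % (n:ℤ) := Int.dvd_self_sub_of_emod_eq rfl
  have : x - resn n x = (x - 1) - (x - 1) % (n:ℤ) := by
    simp only [resn]; push_cast [h3]; ring
  rw [this]; exact h4

lemma resn_eq_of (hn : 0 < n) {x : ℤ} {r : ℕ} (hr : r ∈ Finset.Icc 1 n)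
    (hd : (n:ℤ) ∣ x - r) : resn n x = r := by
  have h1 := resn_mem hn x
  have h2 := resn_dvd hn x
  have h3 : (n:ℤ) ∣ (r : ℤ) - resn n x := by
    have := dvd_sub h2 hd
    simpa using this
  simp only [Finset.mem_Icc] at h1 hr
  rcases h3 with ⟨c, hc⟩
  have hn' : (0:ℤ) < n := by exact_mod_cast hn
  have : c = 0 := by nlinarith [hc]
  rw [this, mul_zero] at hc
  omega

lemma resn_nat (hn : 0 < n) {r : ℕ} (hr : r ∈ Finset.Icc 1 n) : resn n (r:ℤ) = r :=
  resn_eq_of hn hr (by simp)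

lemma resn_congr (hn : 0 < n) {x y : ℤ} (h : (n:ℤ) ∣ x - y) : resn n x = resn n y :=
  resn_eq_of hn (resn_mem hn y) (by
    have := resn_dvd hn y
    have h2 : x - resn n y = (x - y) + (y - resn n y) := by ring
    rw [h2]; exact dvd_add h this)

/-- uniqueness of representative in a window of length `n` -/
lemma window_unique (hn : 0 < n) {a x y : ℤ} (hx : a < x ∧ x ≤ a + n)
    (hy : a < y ∧ y ≤ a + n) (h : (n:ℤ) ∣ x - y) : x = y := by
  rcases h with ⟨c, hc⟩
  have hn' : (0:ℤ) < n := by exact_mod_cast hn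
  have : c = 0 := by nlinarith
  rw [this, mul_zero] at hc
  omega


end Base


section Neck

variable (n k : ℕ) (I : ℕ → Finset ℕ)

open Classical in
/-- the element removed at step `i` (for movers) -/
noncomputable def gnJ (i : ℕ) : ℕ :=
  if h : ∃ j, j ∈ Finset.Icc 1 n ∧ I (i - 1) = insert j (I i \ {i}) then h.choose else 1

/-- indices targeting residue `r` -/
noncomputable def Tset (r : ℕ) : Finset ℕ :=
  (Finset.Icc 1 n).filter (fun i => i ∈ I i ∧ gnJ n I i = r)

noncomputable def tgt (r : ℕ) : ℕ := (Tset n I r).sum id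

noncomputable def sh (r : ℕ) : ℕ :=
  if r ∈ I r then ((((tgt n I r : ℤ) - r - 1) % (n:ℤ)).toNat) + 1 else 0

noncomputable def fN : ℤ → ℤ := fun x => x + sh n I (resn n x)

variable {n k I}
variable (hI : IsSourceGN n k I) (hn : 0 < n) (hk : 0 < k) (hkn : k < n)

section
include hI

lemma I_zero : I 0 = I n := by
  have := hI.1 0
  simpa using this.symm

lemma I_card {r : ℕ} (hr : r ∈ Finset.Icc 1 n) : (I r).card = k := (hI.2.1 r hr).1

lemma I_sub {r : ℕ} (hr : r ∈ Finset.Icc 1 n) : I r ⊆ Finset.Icc 1 n := (hI.2.1 r hr).2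

lemma I_card' {i : ℕ} (hi : i ∈ Finset.Icc 1 n) : (I (i-1)).card = k := by
  simp only [Finset.mem_Icc] at hi
  rcases Nat.eq_or_lt_of_le hi.1 with h | h
  · rw [← h]; simp only [Nat.sub_self]
    rw [I_zero hI]
    exact I_card hI (by simp [Finset.mem_Icc]; omega)
  · exact I_card hI (by simp [Finset.mem_Icc]; omega)

lemma gnJ_spec {i : ℕ} (hi : i ∈ Finset.Icc 1 n) (hm : i ∈ I i) :
    gnJ n I i ∈ Finset.Icc 1 n ∧ I (i-1) = insert (gnJ n I i) (I i \ {i}) ∧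
      gnJ n I i ∉ I i \ {i} := by
  have hk1 : 0 < k := by
    have := I_card hI hi
    have : i ∈ I i := hm
    have hc := Finset.card_pos.mpr ⟨i, hm⟩
    omega
  obtain ⟨j, hj1, hj2⟩ := (hI.2.2 i hi).1 hm
  have hex : ∃ j, j ∈ Finset.Icc 1 n ∧ I (i - 1) = insert j (I i \ {i}) := ⟨j, hj1, hj2⟩
  have h1 : gnJ n I i ∈ Finset.Icc 1 n ∧ I (i-1) = insert (gnJ n I i) (I i \ {i}) := by
    rw [gnJ, dif_pos hex]
    exact hex.choose_spec
  refine ⟨h1.1, h1.2, ?_⟩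
  intro hmem
  have h2 : insert (gnJ n I i) (I i \ {i}) = I i \ {i} := Finset.insert_eq_self.mpr hmem
  have h3 : (I (i-1)).card = k := I_card' hI hi
  have h4 : (I i \ {i}).card = k - 1 := by
    rw [Finset.card_sdiff_of_subset (by simp [hm])]
    simp [I_card hI hi]
  rw [h1.2, h2] at h3
  omega

omit hI in
lemma insert_unique {α : Type*} [DecidableEq α] {s : Finset α} {j j' : α}
    (h1 : j ∉ s) (h2 : j' ∉ s) (h : insert j s = insert j' s) : j = j' := by
  have : j ∈ insert j' s := h ▸ Finset.mem_insert_self j s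
  rcases Finset.mem_insert.mp this with h | h
  · exact h
  · exact absurd h h1

lemma gnJ_unique {i : ℕ} (hi : i ∈ Finset.Icc 1 n) (hm : i ∈ I i) {j : ℕ}
    (hj : I (i-1) = insert j (I i \ {i})) (hj2 : j ∉ I i \ {i}) : gnJ n I i = j := by
  obtain ⟨_, h2, h3⟩ := gnJ_spec hI hi hm
  exact insert_unique h3 hj2 (h2.symm.trans hj)

lemma step_forward {i : ℕ} (hi : i ∈ Finset.Icc 1 n) (hm : i ∈ I i) :
    I i = insert i (I (i-1) \ {gnJ n I i}) := by
  obtain ⟨h1, h2, h3⟩ := gnJ_spec hI hi hm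
  rw [h2]
  ext a
  simp only [Finset.mem_insert, Finset.mem_sdiff, Finset.mem_singleton]
  constructor
  · intro ha
    by_cases hai : a = i
    · exact Or.inl hai
    · right
      constructor
      · exact Or.inr ⟨ha, hai⟩
      · intro haj
        exact h3 (by simp [← haj, ha, hai])
  · rintro (rfl | ⟨(rfl | ⟨ha, _⟩), _⟩)
    · exact hm
    · omega
    · exact ha

lemma step_fix {i : ℕ} (hi : i ∈ Finset.Icc 1 n) (hm : i ∉ I i) : I (i-1) = I i :=
  (hI.2.2 i hi).2 hm

end

end Neck
section Neck2
variable {n k : ℕ} {I : ℕ → Finset ℕ}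
variable (hI : IsSourceGN n k I)

omit hI in
lemma telescope (g : ℕ → ℤ) (N : ℕ) :
    ∑ i ∈ Finset.Icc 1 N, (g i - g (i-1)) = g N - g 0 := by
  induction N with
  | zero => simp
  | succ m ih =>
    rw [Finset.sum_Icc_succ_top (by omega), ih]
    simp only [Nat.add_sub_cancel]
    ring

include hI

lemma delta {r i : ℕ} (hr : r ∈ Finset.Icc 1 n) (hi : i ∈ Finset.Icc 1 n) :
    ((if r ∈ I i then (1:ℤ) else 0) - (if r ∈ I (i-1) then (1:ℤ) else 0))
    = (if i = r ∧ (r ∈ I r ∧ gnJ n I r ≠ r) then 1 else 0)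
      - (if i ∈ I i ∧ gnJ n I i = r ∧ i ≠ r then 1 else 0) := by
  by_cases hm : i ∈ I i
  · obtain ⟨hj1, hj2, hj3⟩ := gnJ_spec hI hi hm
    have hmem : r ∈ I (i-1) ↔ (r = gnJ n I i ∨ (r ∈ I i ∧ r ≠ i)) := by
      rw [hj2]
      simp only [Finset.mem_insert, Finset.mem_sdiff, Finset.mem_singleton]
    by_cases hir : i = r
    · subst hir
      have hmem2 : i ∈ I (i-1) ↔ gnJ n I i = i := by
        rw [hmem]; constructor
        · rintro (h | ⟨_, h⟩)
          · exact h.symm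
          · omega
        · intro h; exact Or.inl h.symm
      by_cases hg : gnJ n I i = i <;> simp [hm, hmem2, hg]
    · by_cases hgr : gnJ n I i = r
      · have hri : r ∉ I i := by
          intro hcon
          exact hj3 (by rw [hgr]; simp [hcon]; omega)
        have : r ∈ I (i-1) := hmem.mpr (Or.inl hgr.symm)
        simp [hri, this, hir, hm, hgr]
      · have : r ∈ I (i-1) ↔ r ∈ I i := by
          rw [hmem]
          constructor
          · rintro (h | ⟨h, _⟩)
            · exact absurd h.symm hgr
            · exact h
          · intro h; exact Or.inr ⟨h, by omega⟩
        by_cases hri : r ∈ I i <;> simp [hri, this, hir, hgr, hm]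
  · have heq : I (i-1) = I i := step_fix hI hi hm
    have h1 : ¬(i = r ∧ (r ∈ I r ∧ gnJ n I r ≠ r)) := by
      rintro ⟨rfl, h, _⟩; exact hm h
    simp [heq, h1, hm]

lemma Tset_card {r : ℕ} (hr : r ∈ Finset.Icc 1 n) :
    (Tset n I r).card = if r ∈ I r then 1 else 0 := by
  have h0 : ∑ i ∈ Finset.Icc 1 n,
      ((if r ∈ I i then (1:ℤ) else 0) - (if r ∈ I (i-1) then (1:ℤ) else 0)) = 0 := by
    rw [telescope (fun i => if r ∈ I i then (1:ℤ) else 0) n, I_zero hI]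
    ring
  rw [Finset.sum_congr rfl (fun i hi => delta hI hr hi)] at h0
  rw [Finset.sum_sub_distrib] at h0
  have h1 : ∑ i ∈ Finset.Icc 1 n,
      (if i = r ∧ (r ∈ I r ∧ gnJ n I r ≠ r) then (1:ℤ) else 0)
      = if r ∈ I r ∧ gnJ n I r ≠ r then 1 else 0 := by
    have hc : ∀ i, (if i = r ∧ (r ∈ I r ∧ gnJ n I r ≠ r) then (1:ℤ) else 0)
        = if i = r then (if r ∈ I r ∧ gnJ n I r ≠ r then (1:ℤ) else 0) else 0 := by
      intro i; split_ifs <;> tauto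
    rw [Finset.sum_congr rfl (fun i _ => hc i), Finset.sum_ite_eq' (Finset.Icc 1 n) r, if_pos hr]
  rw [h1] at h0
  have h2 : ∑ i ∈ Finset.Icc 1 n,
      (if i ∈ I i ∧ gnJ n I i = r ∧ i ≠ r then (1:ℤ) else 0)
      = (((Finset.Icc 1 n).filter (fun i => i ∈ I i ∧ gnJ n I i = r ∧ i ≠ r)).card : ℤ) := by
    rw [Finset.sum_boole]
  rw [h2] at h0
  have h3 : Tset n I r
      = ((Finset.Icc 1 n).filter (fun i => i ∈ I i ∧ gnJ n I i = r ∧ i ≠ r))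
        ∪ ((Finset.Icc 1 n).filter (fun i => i ∈ I i ∧ gnJ n I i = r ∧ i = r)) := by
    ext i
    simp only [Tset, Finset.mem_union, Finset.mem_filter]
    tauto
  have hdisj : Disjoint ((Finset.Icc 1 n).filter (fun i => i ∈ I i ∧ gnJ n I i = r ∧ i ≠ r))
      ((Finset.Icc 1 n).filter (fun i => i ∈ I i ∧ gnJ n I i = r ∧ i = r)) := by
    rw [Finset.disjoint_left]
    intro i hi1 hi2
    simp only [Finset.mem_filter] at hi1 hi2
    exact hi1.2.2.2 hi2.2.2.2
  have h4 : ((Finset.Icc 1 n).filter (fun i => i ∈ I i ∧ gnJ n I i = r ∧ i = r)).card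
      = if r ∈ I r ∧ gnJ n I r = r then 1 else 0 := by
    by_cases h : r ∈ I r ∧ gnJ n I r = r
    · rw [if_pos h]
      have he : (Finset.Icc 1 n).filter (fun i => i ∈ I i ∧ gnJ n I i = r ∧ i = r) = {r} := by
        ext i
        simp only [Finset.mem_filter, Finset.mem_singleton]
        constructor
        · rintro ⟨_, _, _, h⟩; exact h
        · rintro rfl; exact ⟨hr, h.1, h.2, rfl⟩
      rw [he]; simp
    · rw [if_neg h]
      rw [Finset.card_eq_zero, Finset.filter_eq_empty_iff]
      rintro i _ ⟨a, b, rfl⟩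
      exact h ⟨a, b⟩
  have hBcard : (((Finset.Icc 1 n).filter (fun i => i ∈ I i ∧ gnJ n I i = r ∧ i ≠ r)).card : ℤ)
      = if r ∈ I r ∧ gnJ n I r ≠ r then 1 else 0 := by linarith [h0]
  have hBcard' : ((Finset.Icc 1 n).filter (fun i => i ∈ I i ∧ gnJ n I i = r ∧ i ≠ r)).card
      = if r ∈ I r ∧ gnJ n I r ≠ r then 1 else 0 := by
    split_ifs at hBcard ⊢ <;> exact_mod_cast hBcard
  rw [h3, Finset.card_union_of_disjoint hdisj, h4, hBcard']
  by_cases ha : r ∈ I r <;> by_cases hb : gnJ n I r = r <;> simp [ha, hb]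


lemma Tset_nonempty_imp {r i : ℕ} (hr : r ∈ Finset.Icc 1 n) (hi : i ∈ Tset n I r) :
    r ∈ I r := by
  have hc := Tset_card hI hr
  by_contra h
  rw [if_neg h, Finset.card_eq_zero] at hc
  rw [hc] at hi
  exact absurd hi (Finset.notMem_empty i)

lemma tgt_spec {r : ℕ} (hr : r ∈ Finset.Icc 1 n) (hm : r ∈ I r) :
    Tset n I r = {tgt n I r} := by
  have hc := Tset_card hI hr
  rw [if_pos hm] at hc
  obtain ⟨a, ha⟩ := Finset.card_eq_one.mp hc
  have : tgt n I r = a := by rw [tgt, ha, Finset.sum_singleton, id]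
  rw [this, ha]

lemma tgt_mem {r : ℕ} (hr : r ∈ Finset.Icc 1 n) (hm : r ∈ I r) :
    tgt n I r ∈ Finset.Icc 1 n ∧ tgt n I r ∈ I (tgt n I r) ∧ gnJ n I (tgt n I r) = r := by
  have h : tgt n I r ∈ Tset n I r := by rw [tgt_spec hI hr hm]; simp
  simpa only [Tset, Finset.mem_filter] using h

lemma tgt_eq {r i : ℕ} (hr : r ∈ Finset.Icc 1 n) (hm : r ∈ I r)
    (hi : i ∈ Finset.Icc 1 n) (h1 : i ∈ I i) (h2 : gnJ n I i = r) : i = tgt n I r := by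
  have h : i ∈ Tset n I r := by simp only [Tset, Finset.mem_filter]; exact ⟨hi, h1, h2⟩
  rw [tgt_spec hI hr hm] at h
  simpa using h

lemma tgt_ne {r : ℕ} (hr : r ∈ Finset.Icc 1 n) (hm : r ∈ I r) (hg : gnJ n I r ≠ r) :
    tgt n I r ≠ r := by
  intro h
  obtain ⟨_, _, h3⟩ := tgt_mem hI hr hm
  rw [h] at h3
  exact hg h3

lemma mem_formula {r : ℕ} (hr : r ∈ Finset.Icc 1 n) :
    ∀ i, i ≤ n →
    (if r ∈ I i then (1:ℤ) else 0)
    = (if r ∈ I 0 then (1:ℤ) else 0)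
      + (if (r ∈ I r ∧ gnJ n I r ≠ r) ∧ r ≤ i then 1 else 0)
      - (if (r ∈ I r ∧ gnJ n I r ≠ r) ∧ tgt n I r ≤ i then 1 else 0) := by
  have hr1 : 1 ≤ r ∧ r ≤ n := Finset.mem_Icc.mp hr
  intro i
  induction i with
  | zero =>
    intro _
    have h1 : ¬((r ∈ I r ∧ gnJ n I r ≠ r) ∧ r ≤ 0) := by rintro ⟨_, h⟩; omega
    have h2 : ¬((r ∈ I r ∧ gnJ n I r ≠ r) ∧ tgt n I r ≤ 0) := by
      rintro ⟨⟨hm, _⟩, h⟩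
      have := (tgt_mem hI hr hm).1
      simp only [Finset.mem_Icc] at this
      omega
    rw [if_neg h1, if_neg h2]
    ring
  | succ m ih =>
    intro hle
    have hmIcc : m + 1 ∈ Finset.Icc 1 n := by simp only [Finset.mem_Icc]; omega
    have hdelta := delta hI hr hmIcc
    simp only [Nat.add_sub_cancel] at hdelta
    have htge1 : r ∈ I r → 1 ≤ tgt n I r := by
      intro hm
      have := (tgt_mem hI hr hm).1
      simp only [Finset.mem_Icc] at this
      omega
    have hrepl : (if (m+1) ∈ I (m+1) ∧ gnJ n I (m+1) = r ∧ (m+1) ≠ r then (1:ℤ) else 0)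
        = (if (r ∈ I r ∧ gnJ n I r ≠ r) ∧ tgt n I r = m+1 then 1 else 0) := by
      congr 1
      apply propext
      constructor
      · rintro ⟨h1, h2, h3⟩
        have hmem : r ∈ I r := Tset_nonempty_imp hI hr
          (by simp only [Tset, Finset.mem_filter]; exact ⟨hmIcc, h1, h2⟩)
        have hg : gnJ n I r ≠ r := by
          intro hgr
          have : r = tgt n I r := tgt_eq hI hr hmem hr hmem hgr
          have : m + 1 = tgt n I r := tgt_eq hI hr hmem hmIcc h1 h2
          omega
        exact ⟨⟨hmem, hg⟩, (tgt_eq hI hr hmem hmIcc h1 h2).symm⟩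
      · rintro ⟨⟨hm, hg⟩, htg⟩
        obtain ⟨h1, h2, h3⟩ := tgt_mem hI hr hm
        rw [htg] at h2 h3
        refine ⟨h2, h3, ?_⟩
        intro hc
        exact (tgt_ne hI hr hm hg) (by omega)
    rw [hrepl] at hdelta
    have ihm := ih (by omega)
    have h1 : (if (r ∈ I r ∧ gnJ n I r ≠ r) ∧ r ≤ m+1 then (1:ℤ) else 0)
        = (if (r ∈ I r ∧ gnJ n I r ≠ r) ∧ r ≤ m then 1 else 0)
          + (if m+1 = r ∧ (r ∈ I r ∧ gnJ n I r ≠ r) then 1 else 0) := by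
      by_cases hA : (r ∈ I r ∧ gnJ n I r ≠ r)
      · simp only [hA, and_true, true_and]; split_ifs <;> omega
      · simp [hA]
    have h2 : (if (r ∈ I r ∧ gnJ n I r ≠ r) ∧ tgt n I r ≤ m+1 then (1:ℤ) else 0)
        = (if (r ∈ I r ∧ gnJ n I r ≠ r) ∧ tgt n I r ≤ m then 1 else 0)
          + (if (r ∈ I r ∧ gnJ n I r ≠ r) ∧ tgt n I r = m+1 then 1 else 0) := by
      by_cases hA : (r ∈ I r ∧ gnJ n I r ≠ r)
      · have := htge1 hA.1
        simp only [hA, true_and]; split_ifs <;> omega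
      · simp [hA]
    rw [h1, h2]
    linarith [hdelta, ihm]

lemma mem_zero_iff {r : ℕ} (hr : r ∈ Finset.Icc 1 n) :
    r ∈ I 0 ↔ (r ∈ I r ∧ (gnJ n I r ≠ r → tgt n I r ≤ r)) := by
  have hr1 : 1 ≤ r ∧ r ≤ n := Finset.mem_Icc.mp hr
  have h := mem_formula hI hr r hr1.2
  constructor
  · intro h0
    by_cases h1 : r ∈ I r
    · refine ⟨h1, ?_⟩
      intro h2
      by_contra h3
      rw [if_pos h1, if_pos h0, if_pos ⟨⟨h1,h2⟩, le_refl r⟩,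
        if_neg (by rintro ⟨_, hc⟩; omega)] at h
      norm_num at h
    · rw [if_neg h1, if_pos h0, if_neg (by rintro ⟨⟨hc,_⟩,_⟩; exact h1 hc),
        if_neg (by rintro ⟨⟨hc,_⟩,_⟩; exact h1 hc)] at h
      norm_num at h
  · rintro ⟨h1, h2⟩
    by_contra h0
    by_cases hg : gnJ n I r = r
    · rw [if_pos h1, if_neg h0, if_neg (by rintro ⟨⟨_,hc⟩,_⟩; exact hc hg),
        if_neg (by rintro ⟨⟨_,hc⟩,_⟩; exact hc hg)] at h
      norm_num at h
    · have h3 := h2 hg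
      rw [if_pos h1, if_neg h0, if_pos ⟨⟨h1,hg⟩, le_refl r⟩, if_pos ⟨⟨h1,hg⟩, h3⟩] at h
      norm_num at h


omit hI in
lemma sh_le (hn : 0 < n) (r : ℕ) : sh n I r ≤ n := by
  rw [sh]
  split_ifs with h
  · have h0 : (0:ℤ) < (n:ℤ) := by exact_mod_cast hn
    have h2 : ((tgt n I r : ℤ) - r - 1) % (n:ℤ) < n := Int.emod_lt_of_pos _ h0
    have h1 : 0 ≤ ((tgt n I r : ℤ) - r - 1) % (n:ℤ) := Int.emod_nonneg _ (by omega)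
    omega
  · omega

omit hI in
lemma sh_eq_zero_iff {r : ℕ} : sh n I r = 0 ↔ r ∉ I r := by
  rw [sh]
  split_ifs with h <;> simp [h]

omit hI in
lemma sh_cong (hn : 0 < n) {r : ℕ} (hm : r ∈ I r) :
    (n:ℤ) ∣ ((r:ℤ) + sh n I r) - tgt n I r := by
  rw [sh, if_pos hm]
  have h1 : 0 ≤ ((tgt n I r : ℤ) - r - 1) % (n:ℤ) :=
    Int.emod_nonneg _ (by exact_mod_cast hn.ne')
  have h2 : ((((tgt n I r : ℤ) - r - 1) % (n:ℤ)).toNat : ℤ)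
      = ((tgt n I r : ℤ) - r - 1) % (n:ℤ) := Int.toNat_of_nonneg h1
  have h3 : (n:ℤ) ∣ ((tgt n I r : ℤ) - r - 1) - ((tgt n I r : ℤ) - r - 1) % (n:ℤ) :=
    Int.dvd_self_sub_of_emod_eq rfl
  have heq : ((r:ℤ) + ((((tgt n I r : ℤ) - r - 1) % (n:ℤ)).toNat + 1 : ℕ)) - tgt n I r
      = -((((tgt n I r : ℤ) - r - 1) - ((tgt n I r : ℤ) - r - 1) % (n:ℤ))) := by
    push_cast [h2]
    ring
  rw [heq]
  exact dvd_neg.mpr h3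

lemma sum_mem (hn : 0 < n) {r : ℕ} (hr : r ∈ Finset.Icc 1 n) :
    ∑ i ∈ Finset.Icc 1 n, (if r ∈ I i then (1:ℤ) else 0) = sh n I r := by
  have hr1 : 1 ≤ r ∧ r ≤ n := Finset.mem_Icc.mp hr
  have hform : ∀ i ∈ Finset.Icc 1 n,
      (if r ∈ I i then (1:ℤ) else 0)
      = (if r ∈ I 0 then (1:ℤ) else 0)
        + (if (r ∈ I r ∧ gnJ n I r ≠ r) ∧ r ≤ i then 1 else 0)
        - (if (r ∈ I r ∧ gnJ n I r ≠ r) ∧ tgt n I r ≤ i then 1 else 0) := by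
    intro i hi
    exact mem_formula hI hr i (Finset.mem_Icc.mp hi).2
  rw [Finset.sum_congr rfl hform, Finset.sum_sub_distrib, Finset.sum_add_distrib]
  have hcount : ∀ a : ℕ, 1 ≤ a → a ≤ n → ∀ P : Prop, ∀ hP : Decidable P,
      ∑ i ∈ Finset.Icc 1 n, (if P ∧ a ≤ i then (1:ℤ) else 0)
      = if P then ((n + 1 - a : ℕ) : ℤ) else 0 := by
    intro a ha1 ha2 P hP
    by_cases hp : P
    · simp only [hp, true_and, if_true]
      rw [Finset.sum_boole]
      congr 1
      have : (Finset.Icc 1 n).filter (fun i => a ≤ i) = Finset.Icc a n := by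
        ext i
        simp only [Finset.mem_filter, Finset.mem_Icc]
        omega
      rw [this, Nat.card_Icc]
    · simp [hp]
  by_cases hm : r ∈ I r
  · by_cases hg : gnJ n I r = r
    · have hA : ¬(r ∈ I r ∧ gnJ n I r ≠ r) := by tauto
      have h0 : r ∈ I 0 := (mem_zero_iff hI hr).mpr ⟨hm, fun h => absurd hg h⟩
      have htr : tgt n I r = r := (tgt_eq hI hr hm hr hm hg).symm
      simp only [hA, false_and, if_false, if_pos h0, Finset.sum_const_zero, sub_zero, add_zero]
      rw [Finset.sum_const, Nat.card_Icc]
      rw [sh, if_pos hm, htr]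
      have hmod : ((r:ℤ) - r - 1) % (n:ℤ) = n - 1 := by
        have : ((r:ℤ) - r - 1) = -1 := by ring
        rw [this]
        have h1 : (-1 : ℤ) = (n - 1) + (-1) * n := by ring
        rw [h1, Int.add_mul_emod_self_right]
        exact Int.emod_eq_of_lt (by omega) (by omega)
      rw [hmod]
      have : ((n:ℤ) - 1).toNat = n - 1 := by omega
      rw [this]
      simp only [nsmul_eq_mul, mul_one]
      push_cast
      omega
    · have hA : (r ∈ I r ∧ gnJ n I r ≠ r) := ⟨hm, hg⟩
      have htm := (tgt_mem hI hr hm).1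
      simp only [Finset.mem_Icc] at htm
      have htne : tgt n I r ≠ r := tgt_ne hI hr hm hg
      rw [hcount r hr1.1 hr1.2 _ _, hcount (tgt n I r) htm.1 htm.2 _ _]
      rw [sh, if_pos hm]
      by_cases h0 : r ∈ I 0
      · have hle : tgt n I r ≤ r := ((mem_zero_iff hI hr).mp h0).2 hg
        have hlt : tgt n I r < r := by omega
        simp only [if_pos h0, if_pos hA]
        rw [Finset.sum_const, Nat.card_Icc]
        simp only [nsmul_eq_mul, mul_one]
        have hmod : ((tgt n I r : ℤ) - r - 1) % (n:ℤ) = (tgt n I r : ℤ) - r - 1 + n := by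
          have h1 : ((tgt n I r : ℤ) - r - 1) = ((tgt n I r : ℤ) - r - 1 + n) + (-1) * n := by
            ring
          conv_lhs => rw [h1]
          rw [Int.add_mul_emod_self_right]
          exact Int.emod_eq_of_lt (by push_cast; omega) (by push_cast; omega)
        rw [hmod]
        have h2 : (((tgt n I r : ℤ) - r - 1 + n)).toNat = tgt n I r + n - r - 1 := by
          push_cast; omega
        rw [h2]
        push_cast
        omega
      · have hgt : ¬ (tgt n I r ≤ r) := by
          intro hle
          exact h0 ((mem_zero_iff hI hr).mpr ⟨hm, fun _ => hle⟩)
        simp only [if_neg h0, if_pos hA]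
        rw [Finset.sum_const, Nat.card_Icc]
        simp only [nsmul_eq_mul, mul_one]
        have hmod : ((tgt n I r : ℤ) - r - 1) % (n:ℤ) = (tgt n I r : ℤ) - r - 1 :=
          Int.emod_eq_of_lt (by push_cast; omega) (by push_cast; omega)
        rw [hmod]
        have h2 : (((tgt n I r : ℤ) - r - 1)).toNat = tgt n I r - r - 1 := by
          push_cast; omega
        rw [h2]
        push_cast
        omega
  · have hA : ¬(r ∈ I r ∧ gnJ n I r ≠ r) := by tauto
    have h0 : r ∉ I 0 := by
      intro h
      exact hm ((mem_zero_iff hI hr).mp h).1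
    have hs : sh n I r = 0 := sh_eq_zero_iff.mpr hm
    simp [hA, h0, hs]

lemma sum_sh (hn : 0 < n) : ∑ r ∈ Finset.Icc 1 n, (sh n I r : ℤ) = (n:ℤ) * k := by
  have h1 : ∀ r ∈ Finset.Icc 1 n, (sh n I r : ℤ)
      = ∑ i ∈ Finset.Icc 1 n, (if r ∈ I i then (1:ℤ) else 0) := by
    intro r hr
    exact (sum_mem hI hn hr).symm
  rw [Finset.sum_congr rfl h1, Finset.sum_comm]
  have h2 : ∀ i ∈ Finset.Icc 1 n,
      ∑ r ∈ Finset.Icc 1 n, (if r ∈ I i then (1:ℤ) else 0) = (k:ℤ) := by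
    intro i hi
    rw [Finset.sum_boole]
    have : (Finset.Icc 1 n).filter (fun r => r ∈ I i) = I i := by
      ext r
      simp only [Finset.mem_filter]
      constructor
      · exact fun h => h.2
      · intro h
        exact ⟨I_sub hI hi h, h⟩
    rw [this, I_card hI hi]
  rw [Finset.sum_congr rfl h2, Finset.sum_const, Nat.card_Icc]
  simp

end Neck2



section FN
variable {n k : ℕ} {I : ℕ → Finset ℕ}
variable (hI : IsSourceGN n k I)

/-- residue-level map induced by the necklace -/
noncomputable def Fbar (n : ℕ) (I : ℕ → Finset ℕ) (r : ℕ) : ℕ :=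
  resn n ((r:ℤ) + sh n I r)

include hI

omit hI in
lemma Fbar_fixed (hn : 0 < n) {r : ℕ} (hr : r ∈ Finset.Icc 1 n) (hm : r ∉ I r) :
    Fbar n I r = r := by
  rw [Fbar, sh_eq_zero_iff.mpr hm]
  push_cast
  rw [add_zero]
  exact resn_nat hn hr

lemma Fbar_mover (hn : 0 < n) {r : ℕ} (hr : r ∈ Finset.Icc 1 n) (hm : r ∈ I r) :
    Fbar n I r = tgt n I r :=
  resn_eq_of hn (tgt_mem hI hr hm).1 (sh_cong hn hm)

lemma Fbar_injOn (hn : 0 < n) {a b : ℕ} (ha : a ∈ Finset.Icc 1 n) (hb : b ∈ Finset.Icc 1 n)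
    (h : Fbar n I a = Fbar n I b) : a = b := by
  by_cases hma : a ∈ I a <;> by_cases hmb : b ∈ I b
  · rw [Fbar_mover hI hn ha hma, Fbar_mover hI hn hb hmb] at h
    obtain ⟨h1, h2, h3⟩ := tgt_mem hI ha hma
    obtain ⟨h1', h2', h3'⟩ := tgt_mem hI hb hmb
    rw [h] at h3
    exact h3.symm.trans h3'
  · rw [Fbar_mover hI hn ha hma, Fbar_fixed hn hb hmb] at h
    obtain ⟨h1, h2, h3⟩ := tgt_mem hI ha hma
    rw [h] at h2
    exact absurd h2 hmb
  · rw [Fbar_fixed hn ha hma, Fbar_mover hI hn hb hmb] at h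
    obtain ⟨h1, h2, h3⟩ := tgt_mem hI hb hmb
    rw [← h] at h2
    exact absurd h2 hma
  · rw [Fbar_fixed hn ha hma, Fbar_fixed hn hb hmb] at h
    exact h

lemma Fbar_surjOn (hn : 0 < n) {m : ℕ} (hm : m ∈ Finset.Icc 1 n) :
    ∃ r ∈ Finset.Icc 1 n, Fbar n I r = m := by
  have himg : (Finset.Icc 1 n).image (Fbar n I) = Finset.Icc 1 n := by
    apply Finset.eq_of_subset_of_card_le
    · intro x hx
      simp only [Finset.mem_image] at hx
      obtain ⟨r, hr, rfl⟩ := hx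
      exact resn_mem hn _
    · rw [Finset.card_image_of_injOn]
      intro a ha b hb
      exact Fbar_injOn hI hn ha hb
  rw [← himg] at hm
  simpa only [Finset.mem_image] using hm

omit hI in
lemma resn_fN (hn : 0 < n) (x : ℤ) : resn n (fN n I x) = Fbar n I (resn n x) := by
  rw [Fbar]
  apply resn_congr hn
  rw [fN]
  have := resn_dvd hn x
  have heq : x + (sh n I (resn n x) : ℤ) - ((resn n x : ℤ) + (sh n I (resn n x) : ℤ))
      = x - resn n x := by ring
  rw [heq]
  exact this

lemma fN_inj (hn : 0 < n) : Function.Injective (fN n I) := by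
  intro x y h
  have h1 : Fbar n I (resn n x) = Fbar n I (resn n y) := by
    rw [← resn_fN hn x, ← resn_fN hn y, h]
  have h2 : resn n x = resn n y :=
    Fbar_injOn hI hn (resn_mem hn x) (resn_mem hn y) h1
  rw [fN, fN, h2] at h
  omega

lemma fN_surj (hn : 0 < n) : Function.Surjective (fN n I) := by
  intro y
  obtain ⟨r, hr, hfr⟩ := Fbar_surjOn hI hn (resn_mem hn y)
  refine ⟨y - sh n I r, ?_⟩
  have hres : resn n (y - sh n I r) = r := by
    apply resn_eq_of hn hr
    have h1 : (n:ℤ) ∣ ((r:ℤ) + sh n I r) - Fbar n I r := by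
      rw [Fbar]
      exact resn_dvd hn _
    have h2 : (n:ℤ) ∣ y - resn n y := resn_dvd hn y
    rw [hfr] at h1
    have heq : y - (sh n I r : ℤ) - r
        = (y - resn n y) - (((r:ℤ) + sh n I r) - resn n y) := by ring
    rw [heq]
    exact dvd_sub h2 h1
  rw [fN, hres]
  ring

lemma fN_bap (hn : 0 < n) : IsBoundedAffinePerm n k (fN n I) := by
  refine ⟨⟨fN_inj hI hn, fN_surj hI hn⟩, ?_, ?_, ?_⟩
  · intro i
    have hper : resn n (i + n) = resn n i := resn_congr hn (by simp)
    rw [fN, fN, hper]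
    ring
  · intro i
    rw [fN]
    have h1 := sh_le (I := I) hn (resn n i)
    omega
  · have hmain : ∀ i ∈ Finset.Icc (1:ℤ) (n:ℤ), fN n I i - i = (sh n I (resn n i) : ℤ) := by
      intro i _
      rw [fN]; ring
    rw [Finset.sum_congr rfl hmain]
    rw [← sum_sh hI hn]
    apply Finset.sum_nbij' (i := fun x => resn n x) (j := fun r => (r:ℤ))
    · intro a ha
      exact resn_mem hn a
    · intro b hb
      simp only [Finset.mem_Icc] at hb ⊢
      omega
    · intro a ha
      simp only [Finset.mem_Icc] at ha
      have : resn n a = a.toNat := by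
        apply resn_eq_of hn
        · simp only [Finset.mem_Icc]; omega
        · have : ((a.toNat : ℤ)) = a := by omega
          rw [this]; ring_nf; exact dvd_zero _
      rw [this]
      omega
    · intro b hb
      exact resn_nat hn hb
    · intro a _
      rfl

end FN


section NKL
variable {n k : ℕ} {f : ℤ → ℤ}

/-- necklace associated to a bounded affine permutation -/
noncomputable def nkl (n : ℕ) (f : ℤ → ℤ) : ℕ → Finset ℕ :=
  fun i => ((Finset.Icc ((i:ℤ) + 1 - n) (i:ℤ)).filter (fun j => (i:ℤ) < f j)).image (resn n)

lemma mem_nkl {i r : ℕ} :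
    r ∈ nkl n f i ↔ ∃ j : ℤ, ((i:ℤ) + 1 - n ≤ j ∧ j ≤ (i:ℤ)) ∧ (i:ℤ) < f j ∧ resn n j = r := by
  simp only [nkl, Finset.mem_image, Finset.mem_filter, Finset.mem_Icc]
  constructor
  · rintro ⟨j, ⟨⟨h1, h2⟩, h3⟩, h4⟩
    exact ⟨j, ⟨h1, h2⟩, h3, h4⟩
  · rintro ⟨j, ⟨h1, h2⟩, h3, h4⟩
    exact ⟨j, ⟨⟨h1, h2⟩, h3⟩, h4⟩

variable (hf : IsBoundedAffinePerm n k f)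

include hf

lemma f_per_nat : ∀ (x : ℤ) (m : ℕ), f (x + n * m) = f x + n * m := by
  intro x m
  induction m with
  | zero => simp
  | succ p ih =>
    have hstep := hf.2.1 (x + n * p)
    have heq : x + (n:ℤ) * ((p:ℕ) + 1 : ℕ) = x + n * p + n := by push_cast; ring
    rw [heq, hstep, ih]
    push_cast
    ring

lemma f_per_mul (x m : ℤ) : f (x + n * m) = f x + n * m := by
  rcases le_or_gt 0 m with h | h
  · have h1 := f_per_nat hf x m.toNat
    have h2 : ((m.toNat : ℕ) : ℤ) = m := Int.toNat_of_nonneg h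
    rw [h2] at h1
    exact h1
  · have h1 := f_per_nat hf (x + n * m) (-m).toNat
    have h2 : (((-m).toNat : ℕ) : ℤ) = -m := Int.toNat_of_nonneg (by omega)
    rw [h2] at h1
    have heq : x + n * m + n * (-m) = x := by ring
    rw [heq] at h1
    have h3 : (n:ℤ) * (-m) = -(n * m) := by ring
    rw [h3] at h1
    linarith

lemma nkl_subset (hn : 0 < n) (i : ℕ) : nkl n f i ⊆ Finset.Icc 1 n := by
  intro r hr
  rw [mem_nkl] at hr
  obtain ⟨j, _, _, rfl⟩ := hr
  exact resn_mem hn j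

omit hf in
lemma resn_injOn (hn : 0 < n) {a b x : ℤ} (ha : x + 1 - n ≤ a ∧ a ≤ x) (hb : x + 1 - n ≤ b ∧ b ≤ x)
    (h : resn n a = resn n b) : a = b := by
  apply window_unique hn (a := x - n) (by omega) (by omega)
  have h1 := resn_dvd hn a
  have h2 := resn_dvd hn b
  have heq : a - b = (a - (resn n a : ℤ)) - (b - (resn n b : ℤ)) := by rw [h]; ring
  rw [heq]
  exact dvd_sub h1 h2

lemma nkl_per (hn : 0 < n) (r : ℕ) : nkl n f (r + n) = nkl n f r := by
  ext a
  rw [mem_nkl, mem_nkl]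
  constructor
  · rintro ⟨j, ⟨h1, h2⟩, h3, h4⟩
    refine ⟨j - n, ⟨by push_cast at h1 ⊢; omega, by push_cast at h2 ⊢; omega⟩, ?_, ?_⟩
    · have := f_per_mul hf (j - n) 1
      simp only [mul_one] at this
      have hj : j - n + n = j := by ring
      rw [hj] at this
      push_cast at h3 ⊢
      omega
    · rw [← h4]
      exact resn_congr hn (by simpa using Dvd.intro (-1) (by ring))
  · rintro ⟨j, ⟨h1, h2⟩, h3, h4⟩
    refine ⟨j + n, ⟨by push_cast; omega, by push_cast; omega⟩, ?_, ?_⟩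
    · have := f_per_mul hf j 1
      simp only [mul_one] at this
      rw [this]
      push_cast
      omega
    · rw [← h4]
      exact resn_congr hn (by simpa using Dvd.intro 1 (by ring))

/-- the integer-indexed count -/
noncomputable def SInt (n : ℕ) (f : ℤ → ℤ) (x : ℤ) : ℤ :=
  ∑ j ∈ Finset.Icc (x + 1 - n) x, (if x < f j then (1:ℤ) else 0)

omit hf in
lemma Icc_insert_top {a b : ℤ} (h : a ≤ b + 1) :
    Finset.Icc a (b + 1) = insert (b + 1) (Finset.Icc a b) := by
  ext j
  simp only [Finset.mem_Icc, Finset.mem_insert]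
  omega

omit hf in
lemma Icc_insert_bot {a b : ℤ} (h : a ≤ b) :
    Finset.Icc a b = insert a (Finset.Icc (a + 1) b) := by
  ext j
  simp only [Finset.mem_Icc, Finset.mem_insert]
  omega

lemma SInt_step (hn : 0 < n) (x : ℤ) : SInt n f (x + 1) = SInt n f x := by
  obtain ⟨j0, hj0⟩ := hf.1.2 (x + 1)
  have hb := hf.2.2.1
  have hj0b : x + 1 - n ≤ j0 ∧ j0 ≤ x + 1 := by
    have h1 := (hb j0).1
    have h2 := (hb j0).2
    omega
  have hfx1 := (hb (x+1)).1
  have hfx1' := (hb (x+1)).2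
  have hinj := hf.1.1
  -- top and bottom splits
  have htop : SInt n f (x + 1)
      = (if x + 1 < f (x + 1) then (1:ℤ) else 0)
        + ∑ j ∈ Finset.Icc (x + 2 - n) x, (if x + 1 < f j then (1:ℤ) else 0) := by
    rw [SInt]
    have he : x + 1 + 1 - n = x + 2 - n := by ring
    rw [he]
    have h2 : (x:ℤ) + 1 - n ≤ x := by omega
    rw [Icc_insert_top (by omega), Finset.sum_insert (by simp only [Finset.mem_Icc]; omega)]
  have hbot : SInt n f x
      = (if x < f (x + 1 - n) then (1:ℤ) else 0)
        + ∑ j ∈ Finset.Icc (x + 2 - n) x, (if x < f j then (1:ℤ) else 0) := by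
    rw [SInt]
    rw [Icc_insert_bot (by omega), Finset.sum_insert (by simp only [Finset.mem_Icc]; omega)]
    have he : x + 1 - n + 1 = x + 2 - n := by ring
    rw [he]
  have hmid : ∑ j ∈ Finset.Icc (x + 2 - n) x, (if x < f j then (1:ℤ) else 0)
      - ∑ j ∈ Finset.Icc (x + 2 - n) x, (if x + 1 < f j then (1:ℤ) else 0)
      = if (x + 2 - n ≤ j0 ∧ j0 ≤ x) then 1 else 0 := by
    rw [← Finset.sum_sub_distrib]
    have hterm : ∀ j ∈ Finset.Icc (x + 2 - n) x,
        ((if x < f j then (1:ℤ) else 0) - (if x + 1 < f j then (1:ℤ) else 0))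
        = if j = j0 then 1 else 0 := by
      intro j hj
      have hiff : f j = x + 1 ↔ j = j0 := by
        constructor
        · intro h; exact hinj (h.trans hj0.symm)
        · rintro rfl; exact hj0
      by_cases hcase : j = j0
      · rw [if_pos hcase]
        have : f j = x + 1 := hiff.mpr hcase
        rw [this]
        simp
      · rw [if_neg hcase]
        have hne : f j ≠ x + 1 := fun h => hcase (hiff.mp h)
        split_ifs <;> omega
    rw [Finset.sum_congr rfl hterm, Finset.sum_ite_eq' (Finset.Icc (x+2-n) x) j0 (fun _ => (1:ℤ))]
    by_cases h : j0 ∈ Finset.Icc (x + 2 - n) x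
    · rw [if_pos h, if_pos (by simpa only [Finset.mem_Icc] using h)]
    · rw [if_neg h, if_neg (by simpa only [Finset.mem_Icc] using h)]
  have hbotval : (if x < f (x + 1 - n) then (1:ℤ) else 0) = if j0 = x + 1 - n then 1 else 0 := by
    have hfv : f (x + 1 - n) = f (x + 1) - n := by
      have h := f_per_mul hf (x + 1) (-1)
      have he : x + 1 + (n:ℤ) * (-1) = x + 1 - n := by ring
      have he2 : f (x + 1) + (n:ℤ) * (-1) = f (x + 1) - n := by ring
      rw [he, he2] at h
      exact h
    have hiff : x < f (x + 1 - n) ↔ j0 = x + 1 - n := by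
      constructor
      · intro h
        have hfeq : f (x + 1 - n) = x + 1 := by omega
        exact (hinj (hfeq.trans hj0.symm)).symm
      · intro h
        have hfe : f (x + 1 - n) = x + 1 := by rw [h] at hj0; exact hj0
        omega
    split_ifs with h1 h2 h2
    · rfl
    · exact absurd (hiff.mp h1) h2
    · exact absurd (hiff.mpr h2) h1
    · rfl
  have htopval : (if x + 1 < f (x + 1) then (1:ℤ) else 0) = 1 - (if j0 = x + 1 then 1 else 0) := by
    have hiff : f (x + 1) = x + 1 ↔ j0 = x + 1 := by
      constructor
      · intro h
        exact (hinj (h.trans hj0.symm)).symm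
      · intro h
        rw [h] at hj0
        exact hj0
    split_ifs with h1 h2 h2
    · exfalso; have := hiff.mpr h2; omega
    · norm_num
    · norm_num
    · exfalso
      have hfe : f (x + 1) = x + 1 := by omega
      exact h2 (hiff.mp hfe)
  have hnot2 : ¬(j0 = x + 1 ∧ j0 = x + 1 - n) := by rintro ⟨h1, h2⟩; omega
  rw [htop, hbot, htopval, hbotval]
  have hcnt : (if (x + 2 - n ≤ j0 ∧ j0 ≤ x) then (1:ℤ) else 0)
      = 1 - (if j0 = x + 1 then 1 else 0) - (if j0 = x + 1 - n then 1 else 0) := by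
    split_ifs <;> omega
  linarith [hmid, hcnt]


omit hf in
lemma per_mul {F : ℤ → ℤ} (hF : ∀ x, F (x + n) = F x) : ∀ (x m : ℤ), F (x + n * m) = F x := by
  have hnat : ∀ (x : ℤ) (m : ℕ), F (x + n * m) = F x := by
    intro x m
    induction m with
    | zero => simp
    | succ p ih =>
      have heq : x + (n:ℤ) * ((p:ℕ) + 1 : ℕ) = (x + n * p) + n := by push_cast; ring
      rw [heq, hF, ih]
  intro x m
  rcases le_or_gt 0 m with h | h
  · have h1 := hnat x m.toNat
    rwa [Int.toNat_of_nonneg h] at h1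
  · have h1 := hnat (x + n * m) (-m).toNat
    rw [Int.toNat_of_nonneg (by omega : (0:ℤ) ≤ -m)] at h1
    have heq : x + (n:ℤ) * m + n * (-m) = x := by ring
    rw [heq] at h1
    exact h1.symm

omit hf in
lemma periodic_sum (hn : 0 < n) {F : ℤ → ℤ} (hF : ∀ x, F (x + n) = F x) (a : ℤ) :
    ∑ j ∈ Finset.Icc (a + 1) (a + n), F j = ∑ j ∈ Finset.Icc (1:ℤ) (n:ℤ), F j := by
  have hmodmem : ∀ r : ℤ, 0 ≤ (r - a - 1) % (n:ℤ) ∧ (r - a - 1) % (n:ℤ) < n := by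
    intro r
    constructor
    · exact Int.emod_nonneg _ (by exact_mod_cast hn.ne')
    · exact Int.emod_lt_of_pos _ (by exact_mod_cast hn)
  apply Finset.sum_nbij' (i := fun x => ((resn n x : ℕ) : ℤ))
    (j := fun r => a + 1 + ((r - a - 1) % (n:ℤ)))
  · intro x hx
    have := resn_mem hn x
    simp only [Finset.mem_Icc] at this ⊢
    omega
  · intro r hr
    have := hmodmem r
    simp only [Finset.mem_Icc]
    omega
  · intro x hx
    simp only [Finset.mem_Icc] at hx
    apply window_unique hn (a := a) ⟨by have := hmodmem (resn n x); omega,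
      by have := hmodmem (resn n x); omega⟩ ⟨by omega, by omega⟩
    have h1 : (n:ℤ) ∣ ((resn n x : ℤ) - a - 1) % (n:ℤ) - ((resn n x : ℤ) - a - 1) :=
      ⟨-(((resn n x : ℤ) - a - 1) / n), by rw [Int.emod_def]; ring⟩
    have h2 := resn_dvd hn x
    have heq : a + 1 + ((resn n x : ℤ) - a - 1) % (n:ℤ) - x
        = (((resn n x : ℤ) - a - 1) % (n:ℤ) - ((resn n x : ℤ) - a - 1)) - (x - resn n x) := by
      ring
    rw [heq]
    exact dvd_sub h1 h2
  · intro r hr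
    simp only [Finset.mem_Icc] at hr
    have hrt : r.toNat ∈ Finset.Icc 1 n := by simp only [Finset.mem_Icc]; omega
    have := resn_eq_of hn hrt (x := a + 1 + ((r - a - 1) % (n:ℤ)))
      (by
        have h1 : (n:ℤ) ∣ ((r:ℤ) - a - 1) % (n:ℤ) - ((r:ℤ) - a - 1) :=
          ⟨-(((r:ℤ) - a - 1) / n), by rw [Int.emod_def]; ring⟩
        have heq : a + 1 + (r - a - 1) % (n:ℤ) - (r.toNat : ℤ)
            = ((r - a - 1) % (n:ℤ) - (r - a - 1)) + (r - r.toNat) := by ring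
        rw [heq]
        exact dvd_add h1 (by rw [Int.toNat_of_nonneg (by omega : (0:ℤ) ≤ r)]; simp))
    rw [this]
    omega
  · intro x _
    obtain ⟨m, hm⟩ := resn_dvd hn x
    have hx' : x = (resn n x : ℤ) + n * m := by omega
    calc F x = F ((resn n x : ℤ) + n * m) := by rw [← hx']
    _ = F (resn n x) := per_mul hF _ m

lemma SInt_const (hn : 0 < n) : ∀ m : ℕ, SInt n f (m : ℤ) = SInt n f 0 := by
  intro m
  induction m with
  | zero => simp
  | succ p ih =>
    have := SInt_step hf hn (p : ℤ)
    rw [← ih, ← this]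
    exact congrArg _ (by push_cast; ring)

lemma card_nkl (hn : 0 < n) (i : ℕ) : ((nkl n f i).card : ℤ) = SInt n f (i : ℤ) := by
  have hinj : Set.InjOn (resn n)
      ((Finset.Icc ((i:ℤ) + 1 - n) (i:ℤ)).filter (fun j => (i:ℤ) < f j)) := by
    intro a ha b hb hab
    simp only [Finset.coe_filter, Set.mem_setOf_eq, Finset.mem_Icc] at ha hb
    exact resn_injOn hn (x := (i:ℤ)) ⟨ha.1.1, ha.1.2⟩ ⟨hb.1.1, hb.1.2⟩ hab
  rw [nkl, Finset.card_image_of_injOn hinj, SInt, Finset.sum_boole]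

lemma sum_SInt (hn : 0 < n) : ∑ i ∈ Finset.Icc (1:ℤ) (n:ℤ), SInt n f i = (n:ℤ) * k := by
  have hstep1 : ∀ i ∈ Finset.Icc (1:ℤ) (n:ℤ), SInt n f i
      = ∑ t ∈ Finset.Icc (0:ℤ) ((n:ℤ) - 1), (if t < f (i - t) - (i - t) then (1:ℤ) else 0) := by
    intro i _
    rw [SInt]
    apply Finset.sum_nbij' (i := fun j => i - j) (j := fun t => i - t)
    · intro a ha; simp only [Finset.mem_Icc] at *; omega
    · intro a ha; simp only [Finset.mem_Icc] at *; omega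
    · intro a _; ring
    · intro a _; ring
    · intro a _
      rw [show i - (i - a) = a by ring]
      exact if_congr (by constructor <;> intro <;> omega) rfl rfl
  rw [Finset.sum_congr rfl hstep1, Finset.sum_comm]
  have hstep3 : ∀ t ∈ Finset.Icc (0:ℤ) ((n:ℤ)-1),
      ∑ i ∈ Finset.Icc (1:ℤ) (n:ℤ), (if t < f (i - t) - (i - t) then (1:ℤ) else 0)
      = ∑ j ∈ Finset.Icc (1:ℤ) (n:ℤ), (if t < f j - j then (1:ℤ) else 0) := by
    intro t _
    have h1 : ∑ i ∈ Finset.Icc (1:ℤ) (n:ℤ), (if t < f (i - t) - (i - t) then (1:ℤ) else 0)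
        = ∑ j ∈ Finset.Icc (1 - t) ((n:ℤ) - t), (if t < f j - j then (1:ℤ) else 0) := by
      apply Finset.sum_nbij' (i := fun x => x - t) (j := fun x => x + t)
      · intro a ha; simp only [Finset.mem_Icc] at *; omega
      · intro a ha; simp only [Finset.mem_Icc] at *; omega
      · intro a _; ring
      · intro a _; ring
      · intro a _; rfl
    rw [h1]
    have hper : ∀ x : ℤ, (if t < f (x + n) - (x + n) then (1:ℤ) else 0)
        = (if t < f x - x then (1:ℤ) else 0) := by
      intro x
      rw [hf.2.1 x]
      exact if_congr (by constructor <;> intro <;> omega) rfl rfl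
    have := periodic_sum hn (F := fun j => if t < f j - j then (1:ℤ) else 0) hper (-t)
    have heq1 : -t + 1 = 1 - t := by ring
    have heq2 : -t + (n:ℤ) = (n:ℤ) - t := by ring
    rw [heq1, heq2] at this
    exact this
  rw [Finset.sum_congr rfl hstep3, Finset.sum_comm]
  have hstep4 : ∀ j ∈ Finset.Icc (1:ℤ) (n:ℤ),
      ∑ t ∈ Finset.Icc (0:ℤ) ((n:ℤ)-1), (if t < f j - j then (1:ℤ) else 0) = f j - j := by
    intro j _
    have hb := hf.2.2.1 j
    rw [Finset.sum_boole]
    have hfe : (Finset.Icc (0:ℤ) ((n:ℤ)-1)).filter (fun t => t < f j - j)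
        = Finset.Icc 0 (f j - j - 1) := by
      ext t; simp only [Finset.mem_filter, Finset.mem_Icc]; omega
    rw [hfe, Int.card_Icc]
    rw [show f j - j - 1 + 1 - 0 = f j - j by ring, Int.toNat_of_nonneg (by omega)]
  rw [Finset.sum_congr rfl hstep4]
  exact hf.2.2.2

lemma SInt_k (hn : 0 < n) (x : ℤ) (hx : 0 ≤ x) : SInt n f x = (k:ℤ) := by
  have h1 : ∀ y : ℤ, 0 ≤ y → SInt n f y = SInt n f 0 := by
    intro y hy
    have := SInt_const hf hn y.toNat
    rwa [Int.toNat_of_nonneg hy] at this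
  have h2 : ∑ i ∈ Finset.Icc (1:ℤ) (n:ℤ), SInt n f i
      = ∑ i ∈ Finset.Icc (1:ℤ) (n:ℤ), SInt n f 0 := by
    apply Finset.sum_congr rfl
    intro i hi
    simp only [Finset.mem_Icc] at hi
    exact h1 i (by omega)
  rw [sum_SInt hf hn, Finset.sum_const, Int.card_Icc] at h2
  have h3 : ((n:ℤ) + 1 - 1).toNat = n := by omega
  rw [h3] at h2
  simp only [nsmul_eq_mul] at h2
  have hne : (n:ℤ) ≠ 0 := by exact_mod_cast hn.ne'
  have h4 : (k:ℤ) = SInt n f 0 := mul_left_cancel₀ hne h2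
  rw [h1 x hx, ← h4]

lemma nkl_card_k (hn : 0 < n) (i : ℕ) : (nkl n f i).card = k := by
  have h1 := card_nkl hf hn i
  have h2 := SInt_k hf hn (i:ℤ) (by omega)
  omega

end NKL

section NKL2
variable {n k : ℕ} {f : ℤ → ℤ}
variable (hf : IsBoundedAffinePerm n k f)
include hf

lemma nkl_mem_self (hn : 0 < n) {i : ℕ} (hi : i ∈ Finset.Icc 1 n) :
    i ∈ nkl n f i ↔ f i ≠ i := by
  have hii : resn n ((i:ℤ)) = i := resn_nat hn hi
  have hb := hf.2.2.1 (i:ℤ)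
  constructor
  · rintro h hfi
    rw [mem_nkl] at h
    obtain ⟨j, ⟨h1, h2⟩, h3, h4⟩ := h
    have hji : j = (i:ℤ) := by
      apply resn_injOn hn (x := (i:ℤ)) ⟨h1, h2⟩ ⟨by omega, by omega⟩
      rw [h4, hii]
    rw [hji, hfi] at h3
    omega
  · intro h
    rw [mem_nkl]
    exact ⟨(i:ℤ), ⟨by omega, by omega⟩, by omega, hii⟩

lemma nkl_fix_step (hn : 0 < n) (hn2 : 2 ≤ n) {i : ℕ} (hi : i ∈ Finset.Icc 1 n)
    (hfi : f i = i) : nkl n f (i - 1) = nkl n f i := by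
  have hi' : 1 ≤ i ∧ i ≤ n := Finset.mem_Icc.mp hi
  have hcast : ((i - 1 : ℕ) : ℤ) = (i:ℤ) - 1 := by omega
  have hinj := hf.1.1
  ext r
  rw [mem_nkl, mem_nkl, hcast]
  constructor
  · rintro ⟨j, ⟨h1, h2⟩, h3, h4⟩
    -- f j ≥ i, f j ≠ i unless j = i (impossible), j ≠ i - n
    have hfj : f j ≠ (i:ℤ) := by
      intro hc
      have : j = (i:ℤ) := hinj (by rw [hc, hfi])
      omega
    have hjne : j ≠ (i:ℤ) - n := by
      intro hc
      have := f_per_mul hf (i:ℤ) (-1)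
      have he : (i:ℤ) + (n:ℤ) * (-1) = (i:ℤ) - n := by ring
      rw [he] at this
      rw [hc, this, hfi] at h3
      omega
    exact ⟨j, ⟨by omega, by omega⟩, by omega, h4⟩
  · rintro ⟨j, ⟨h1, h2⟩, h3, h4⟩
    have hjne : j ≠ (i:ℤ) := by
      intro hc
      rw [hc, hfi] at h3
      omega
    exact ⟨j, ⟨by omega, by omega⟩, by omega, h4⟩

lemma nkl_mover_step (hn : 0 < n) {i : ℕ} (hi : i ∈ Finset.Icc 1 n)
    (hfi : f i ≠ i) {j0 : ℤ} (hj0 : f j0 = i) :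
    nkl n f (i - 1) = insert (resn n j0) (nkl n f i \ {i}) := by
  have hi' : 1 ≤ i ∧ i ≤ n := Finset.mem_Icc.mp hi
  have hcast : ((i - 1 : ℕ) : ℤ) = (i:ℤ) - 1 := by omega
  have hinj := hf.1.1
  have hbj0 := hf.2.2.1 j0
  have hbi := hf.2.2.1 (i:ℤ)
  have hj0i : j0 ≠ (i:ℤ) := by
    intro hc
    rw [hc] at hj0
    exact hfi hj0
  have hj0r : (i:ℤ) - n ≤ j0 ∧ j0 ≤ (i:ℤ) - 1 := by omega
  ext r
  simp only [Finset.mem_insert, Finset.mem_sdiff, Finset.mem_singleton]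
  rw [mem_nkl, mem_nkl, hcast]
  constructor
  · rintro ⟨j, ⟨h1, h2⟩, h3, h4⟩
    by_cases hcase : f j = (i:ℤ)
    · left
      have : j = j0 := hinj (by rw [hcase, hj0])
      rw [← h4, this]
    · right
      have hfj : (i:ℤ) < f j := by omega
      have hjlow : (i:ℤ) + 1 - n ≤ j := by
        by_contra hc
        have hje : j = (i:ℤ) - n := by omega
        have := f_per_mul hf (i:ℤ) (-1)
        have he : (i:ℤ) + (n:ℤ) * (-1) = (i:ℤ) - n := by ring
        rw [he] at this
        rw [hje, this] at hfj
        omega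
      refine ⟨⟨j, ⟨hjlow, by omega⟩, hfj, h4⟩, ?_⟩
      intro hc
      have hji : resn n j = resn n (i:ℤ) := by rw [h4, hc, resn_nat hn hi]
      have : j = (i:ℤ) := resn_injOn hn (x := (i:ℤ)) ⟨by omega, by omega⟩ ⟨by omega, by omega⟩ hji
      omega
  · rintro (rfl | ⟨⟨j, ⟨h1, h2⟩, h3, h4⟩, hne⟩)
    · exact ⟨j0, ⟨by omega, by omega⟩, by omega, rfl⟩
    · have hji : j ≠ (i:ℤ) := by
        intro hc
        rw [← h4, hc, resn_nat hn hi] at hne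
        exact hne rfl
      exact ⟨j, ⟨by omega, by omega⟩, by omega, h4⟩

lemma nkl_sourceGN (hn : 0 < n) (hn2 : 2 ≤ n) : IsSourceGN n k (nkl n f) := by
  refine ⟨nkl_per hf hn, ?_, ?_⟩
  · intro r hr
    exact ⟨nkl_card_k hf hn r, nkl_subset hf hn r⟩
  · intro i hi
    constructor
    · intro hm
      have hfi : f i ≠ i := (nkl_mem_self hf hn hi).mp hm
      obtain ⟨j0, hj0⟩ := hf.1.2 (i:ℤ)
      exact ⟨resn n j0, resn_mem hn j0, nkl_mover_step hf hn hi hfi hj0⟩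
    · intro hm
      have hfi : f i = i := by
        by_contra hc
        exact hm ((nkl_mem_self hf hn hi).mpr hc)
      exact nkl_fix_step hf hn hn2 hi hfi

lemma gnJ_nkl (hn : 0 < n) (hk : 0 < k) (hkn : k < n) {i : ℕ} (hi : i ∈ Finset.Icc 1 n)
    (hfi : f i ≠ i) {j0 : ℤ} (hj0 : f j0 = i) :
    gnJ n (nkl n f) i = resn n j0 := by
  have hn2 : 2 ≤ n := by omega
  have hGN := nkl_sourceGN hf hn hn2
  have hmem : i ∈ nkl n f i := (nkl_mem_self hf hn hi).mpr hfi
  apply gnJ_unique hGN hi hmem (nkl_mover_step hf hn hi hfi hj0)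
  -- resn n j0 ∉ nkl n f i \ {i}
  intro hc
  simp only [Finset.mem_sdiff, Finset.mem_singleton] at hc
  obtain ⟨hc1, hc2⟩ := hc
  rw [mem_nkl] at hc1
  obtain ⟨j, ⟨h1, h2⟩, h3, h4⟩ := hc1
  have hbj0 := hf.2.2.1 j0
  have hbi := hf.2.2.1 (i:ℤ)
  have hj0i : j0 ≠ (i:ℤ) := by
    intro hc
    rw [hc] at hj0
    exact hfi hj0
  have hj0r : (i:ℤ) - n ≤ j0 ∧ j0 ≤ (i:ℤ) - 1 := by omega
  -- j ≡ j0 (mod n), j ∈ [i+1-n, i], j0 ∈ [i-n, i-1]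
  have hdvd : (n:ℤ) ∣ j - j0 := by
    have d1 := resn_dvd hn j
    have d2 := resn_dvd hn j0
    have heq : j - j0 = (j - resn n j) - (j0 - resn n j0) := by rw [h4]; ring
    rw [heq]
    exact dvd_sub d1 d2
  rcases eq_or_ne j j0 with rfl | hne
  · rw [hj0] at h3
    omega
  · -- j = j0 + n forced
    have hj : j = j0 + n := by
      obtain ⟨c, hcc⟩ := hdvd
      have hnpos : (0:ℤ) < n := by omega
      have hb1 : -(n:ℤ) < j - j0 := by omega
      have hb2 : j - j0 ≤ (n:ℤ) := by omega
      rw [hcc] at hb1 hb2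
      have hcle : c ≤ 1 := by
        by_contra hgt
        push_neg at hgt
        nlinarith
      have hcge : 1 ≤ c := by
        rcases lt_trichotomy c 0 with hl | rfl | hg
        · exfalso; nlinarith
        · exfalso; rw [mul_zero] at hcc; omega
        · omega
      have : c = 1 := by omega
      rw [this, mul_one] at hcc
      omega
    have hje : j = (i:ℤ) := by omega
    rw [← h4, hje, resn_nat hn hi] at hc2
    exact hc2 rfl

end NKL2

section Ext
variable {n k : ℕ} {I I' : ℕ → Finset ℕ}

lemma necklace_ext (hI : IsSourceGN n k I) (hI' : IsSourceGN n k I') (hn : 0 < n)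
    (hmem : ∀ r ∈ Finset.Icc 1 n, (r ∈ I r ↔ r ∈ I' r))
    (hJ : ∀ i ∈ Finset.Icc 1 n, i ∈ I i → gnJ n I i = gnJ n I' i) : I = I' := by
  have hT : ∀ r, Tset n I r = Tset n I' r := by
    intro r
    ext i
    simp only [Tset, Finset.mem_filter]
    constructor
    · rintro ⟨hi, h1, h2⟩
      exact ⟨hi, (hmem i hi).mp h1, by rw [← hJ i hi h1]; exact h2⟩
    · rintro ⟨hi, h1, h2⟩
      have h1' : i ∈ I i := (hmem i hi).mpr h1
      exact ⟨hi, h1', by rw [hJ i hi h1']; exact h2⟩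
  have htgt : ∀ r, tgt n I r = tgt n I' r := by
    intro r
    rw [tgt, tgt, hT]
  have hnIcc : n ∈ Finset.Icc 1 n := by simp only [Finset.mem_Icc]; omega
  have h0 : I 0 = I' 0 := by
    ext r
    by_cases hr : r ∈ Finset.Icc 1 n
    · rw [mem_zero_iff hI hr, mem_zero_iff hI' hr, htgt]
      constructor
      · rintro ⟨h1, h2⟩
        refine ⟨(hmem r hr).mp h1, ?_⟩
        intro hg
        apply h2
        rw [hJ r hr h1]
        exact hg
      · rintro ⟨h1, h2⟩
        have h1' := (hmem r hr).mpr h1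
        refine ⟨h1', ?_⟩
        intro hg
        apply h2
        rw [← hJ r hr h1']
        exact hg
    · constructor <;> intro h <;> exfalso
      · have hsub : I 0 ⊆ Finset.Icc 1 n := by
          rw [I_zero hI]; exact I_sub hI hnIcc
        exact hr (hsub h)
      · have hsub : I' 0 ⊆ Finset.Icc 1 n := by
          rw [I_zero hI']; exact I_sub hI' hnIcc
        exact hr (hsub h)
  have hupto : ∀ i, i ≤ n → I i = I' i := by
    intro i
    induction i with
    | zero => intro _; exact h0
    | succ m ih =>
      intro hle
      have hmi : m + 1 ∈ Finset.Icc 1 n := by simp only [Finset.mem_Icc]; omega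
      have hIm := ih (by omega)
      by_cases hmem1 : (m+1) ∈ I (m+1)
      · have hmem2 : (m+1) ∈ I' (m+1) := (hmem _ hmi).mp hmem1
        have s1 := step_forward hI hmi hmem1
        have s2 := step_forward hI' hmi hmem2
        simp only [Nat.add_sub_cancel] at s1 s2
        rw [s1, s2, hIm, hJ _ hmi hmem1]
      · have hmem2 : (m+1) ∉ I' (m+1) := fun h => hmem1 ((hmem _ hmi).mpr h)
        have s1 := step_fix hI hmi hmem1
        have s2 := step_fix hI' hmi hmem2
        simp only [Nat.add_sub_cancel] at s1 s2
        rw [← s1, ← s2, hIm]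
  funext i
  induction i using Nat.strong_induction_on with
  | _ i ih =>
    by_cases h : i ≤ n
    · exact hupto i h
    · have hi' : i - n + n = i := by omega
      rw [← hi', hI.1 (i-n), hI'.1 (i-n)]
      exact ih (i - n) (by omega)

end Ext

section Round
variable {n k : ℕ}

lemma fN_nkl {f : ℤ → ℤ} (hf : IsBoundedAffinePerm n k f)
    (hn : 0 < n) (hk : 0 < k) (hkn : k < n) : fN n (nkl n f) = f := by
  have hn2 : 2 ≤ n := by omega
  have hGN := nkl_sourceGN hf hn hn2
  have hkey : ∀ r : ℕ, r ∈ Finset.Icc 1 n → fN n (nkl n f) (r:ℤ) = f (r:ℤ) := by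
    intro r hr
    have hres : resn n (r:ℤ) = r := resn_nat hn hr
    rw [fN, hres]
    by_cases hm : r ∈ nkl n f r
    · have hfr : f r ≠ r := (nkl_mem_self hf hn hr).mp hm
      set i := resn n (f (r:ℤ)) with hidef
      have hiIcc : i ∈ Finset.Icc 1 n := resn_mem hn _
      obtain ⟨m, hmv⟩ := resn_dvd hn (f (r:ℤ))
      have hfi_ne : f (i:ℤ) ≠ (i:ℤ) := by
        intro hfix
        have h1 : f ((i:ℤ) + n * m) = (i:ℤ) + n * m := by
          rw [f_per_mul hf, hfix]
        have h2 : f (r:ℤ) = (i:ℤ) + n * m := by omega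
        have h3 : (r:ℤ) = (i:ℤ) + n * m := hf.1.1 (show f (r:ℤ) = f ((i:ℤ) + n * m) by rw [h1]; exact h2)
        rw [← h3] at h2
        exact hfr h2
      have hmemi : i ∈ nkl n f i := (nkl_mem_self hf hn hiIcc).mpr hfi_ne
      have hj0 : f ((r:ℤ) - n * m) = (i:ℤ) := by
        have hpm := f_per_mul hf (r:ℤ) (-m)
        have he : (r:ℤ) + n * (-m) = r - n * m := by ring
        rw [he] at hpm
        rw [hpm]
        omega
      have hgnJ : gnJ n (nkl n f) i = resn n ((r:ℤ) - n * m) :=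
        gnJ_nkl hf hn hk hkn hiIcc hfi_ne hj0
      have hresr : resn n ((r:ℤ) - n * m) = r := resn_eq_of hn hr ⟨-m, by ring⟩
      rw [hresr] at hgnJ
      have htgt : i = tgt n (nkl n f) r := tgt_eq hGN hr hm hiIcc hmemi hgnJ
      rw [sh, if_pos hm, ← htgt]
      have hb := hf.2.2.1 (r:ℤ)
      have hmod1 : 0 ≤ ((i:ℤ) - r - 1) % (n:ℤ) := Int.emod_nonneg _ (by exact_mod_cast hn.ne')
      have hmod2 : ((i:ℤ) - r - 1) % (n:ℤ) < n := Int.emod_lt_of_pos _ (by exact_mod_cast hn)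
      apply window_unique hn (a := (r:ℤ)) ⟨by push_cast; omega, by push_cast; omega⟩
        ⟨by omega, by omega⟩
      have hd : (n:ℤ) ∣ ((i:ℤ) - r - 1) % (n:ℤ) - ((i:ℤ) - r - 1) :=
        ⟨-(((i:ℤ) - r - 1) / n), by rw [Int.emod_def]; ring⟩
      have heq : (r:ℤ) + ((((i:ℤ) - r - 1) % (n:ℤ)).toNat + 1 : ℕ) - f (r:ℤ)
          = (((i:ℤ) - r - 1) % (n:ℤ) - ((i:ℤ) - r - 1)) - ((f (r:ℤ)) - i) := by
        push_cast [Int.toNat_of_nonneg hmod1]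
        ring
      rw [heq]
      exact dvd_sub hd ⟨m, by omega⟩
    · have hfr : f (r:ℤ) = r := by
        by_contra hc
        exact hm ((nkl_mem_self hf hn hr).mpr hc)
      rw [sh_eq_zero_iff.mpr hm, hfr]
      push_cast
      ring
  funext x
  obtain ⟨m, hmv⟩ := resn_dvd hn x
  have hx : x = (resn n x : ℤ) + n * m := by omega
  have h1 : fN n (nkl n f) x = fN n (nkl n f) (resn n x) + n * m := by
    rw [fN, fN, resn_nat hn (resn_mem hn x)]
    omega
  have h2 : f x = f (resn n x) + n * m := by
    conv_lhs => rw [hx]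
    rw [f_per_mul hf]
  rw [h1, h2, hkey (resn n x) (resn_mem hn x)]

lemma nkl_fN {I : ℕ → Finset ℕ} (hI : IsSourceGN n k I)
    (hn : 0 < n) (hk : 0 < k) (hkn : k < n) : nkl n (fN n I) = I := by
  have hn2 : 2 ≤ n := by omega
  have hbap : IsBoundedAffinePerm n k (fN n I) := fN_bap hI hn
  have hGN1 : IsSourceGN n k (nkl n (fN n I)) := nkl_sourceGN hbap hn hn2
  have hfNr : ∀ r : ℕ, r ∈ Finset.Icc 1 n → fN n I (r:ℤ) = r + sh n I r := by
    intro r hr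
    rw [fN, resn_nat hn hr]
  have hmem : ∀ r ∈ Finset.Icc 1 n, (r ∈ nkl n (fN n I) r ↔ r ∈ I r) := by
    intro r hr
    rw [nkl_mem_self hbap hn hr, hfNr r hr]
    constructor
    · intro h
      by_contra hc
      rw [sh_eq_zero_iff.mpr hc] at h
      simp at h
    · intro h hc
      have hs : sh n I r = 0 := by omega
      exact (sh_eq_zero_iff.mp hs) h
  apply necklace_ext hGN1 hI hn hmem
  intro i hi hmi
  have hIi : i ∈ I i := ((hmem i hi).mp hmi)
  set j := gnJ n I i with hjdef
  obtain ⟨hjIcc, hjins, hjnot⟩ := gnJ_spec hI hi hIi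
  -- j ∈ I j and tgt I j = i
  have hiT : i ∈ Tset n I j := by
    simp only [Tset, Finset.mem_filter]
    exact ⟨hi, hIi, hjdef.symm⟩
  have hjIj : j ∈ I j := Tset_nonempty_imp hI hjIcc hiT
  have htgtj : i = tgt n I j := tgt_eq hI hjIcc hjIj hi hIi rfl
  -- witness j0
  have hj0 : fN n I ((i:ℤ) - sh n I j) = (i:ℤ) := by
    have hresj0 : resn n ((i:ℤ) - sh n I j) = j := by
      apply resn_eq_of hn hjIcc
      have hc := sh_cong hn (I := I) hjIj
      rw [← htgtj] at hc
      obtain ⟨c, hcc⟩ := hc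
      exact ⟨-c, by linarith [hcc, show (n:ℤ) * (-c) = -((n:ℤ) * c) from by ring]⟩
    rw [fN, hresj0]
    ring
  have hfNi_ne : fN n I (i:ℤ) ≠ (i:ℤ) := by
    rw [hfNr i hi]
    have : sh n I i ≠ 0 := fun h => (sh_eq_zero_iff.mp h) hIi
    omega
  have := gnJ_nkl hbap hn hk hkn hi hfNi_ne hj0
  rw [this]
  apply resn_eq_of hn hjIcc
  have hc := sh_cong hn (I := I) hjIj
  rw [← htgtj] at hc
  obtain ⟨c, hcc⟩ := hc
  exact ⟨-c, by linarith [hcc, show (n:ℤ) * (-c) = -((n:ℤ) * c) from by ring]⟩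

end Round

end GNP

theorem stmt0 (n k : ℕ) (hn : 0 < n) (hk : 0 < k) (hkn : k < n) :
    Nonempty ({I : ℕ → Finset ℕ // IsSourceGN n k I} ≃
      {f : ℤ → ℤ // IsBoundedAffinePerm n k f}) := by
  refine ⟨{
    toFun := fun I => ⟨GNP.fN n I.1, GNP.fN_bap I.2 hn⟩
    invFun := fun f => ⟨GNP.nkl n f.1, GNP.nkl_sourceGN f.2 hn (by omega)⟩
    left_inv := ?_
    right_inv := ?_ }⟩
  · rintro ⟨I, hI⟩
    exact Subtype.ext (GNP.nkl_fN hI hn hk hkn)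
  · rintro ⟨f, hf⟩
    exact Subtype.ext (GNP.fN_nkl hf hn hk hkn)
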